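/- Let T > 0, C₁ ≥ 0, and let m̄, M̄ : [0,T) → ℝ be differentiable with m̄(t) > 0 for all t, m̄'(t) = −2·m̄(t)·M̄(t) for all t, and M̄'(t) ≤ −2·M̄(t)² + C₁·m̄(t) for all t. Then for every t ∈ [0,T): 0 < 1/m̄(t) ≤ 2·(M̄(0)/m̄(0))·t + C₁·t² + 1/m̄(0). -/

import Mathlib

open Set

lemma aux_mono (T : ℝ) (f f' : ℝ → ℝ)
    (hf : ∀ x ∈ Set.Ico (0 : ℝ) T, HasDerivAt f (f' x) x)
    (hf' : ∀ x ∈ Set.Ico (0 : ℝ) T, 0 ≤ f' x) :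
    ∀ t ∈ Set.Ico (0 : ℝ) T, f 0 ≤ f t := by
  intro t ht
  have hsub : Icc (0 : ℝ) t ⊆ Ico 0 T := fun x hx => ⟨hx.1, lt_of_le_of_lt hx.2 ht.2⟩
  have hsub' : Ioo (0 : ℝ) t ⊆ Ico 0 T := fun x hx => hsub ⟨hx.1.le, hx.2.le⟩
  have hmono : MonotoneOn f (Icc 0 t) := by
    apply monotoneOn_of_deriv_nonneg (convex_Icc 0 t)
    · exact fun x hx => (hf x (hsub hx)).continuousAt.continuousWithinAt
    · intro x hx
      rw [interior_Icc] at hx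
      exact (hf x (hsub' hx)).differentiableAt.differentiableWithinAt
    · intro x hx
      rw [interior_Icc] at hx
      rw [(hf x (hsub' hx)).deriv]
      exact hf' x (hsub' hx)
  exact hmono ⟨le_refl 0, ht.1⟩ ⟨ht.1, le_refl t⟩ ht.1

theorem stmt15 (T C₁ : ℝ) (hT : 0 < T) (hC : 0 ≤ C₁) (mb Mb : ℝ → ℝ)
    (hpos : ∀ t ∈ Set.Ico (0 : ℝ) T, 0 < mb t)
    (hm : ∀ t ∈ Set.Ico (0 : ℝ) T, HasDerivAt mb (-2 * mb t * Mb t) t)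
    (hMdiff : ∀ t ∈ Set.Ico (0 : ℝ) T, DifferentiableAt ℝ Mb t)
    (hM : ∀ t ∈ Set.Ico (0 : ℝ) T, deriv Mb t ≤ -2 * (Mb t) ^ 2 + C₁ * mb t) :
    ∀ t ∈ Set.Ico (0 : ℝ) T,
      0 < 1 / mb t ∧ 1 / mb t ≤ 2 * (Mb 0 / mb 0) * t + C₁ * t ^ 2 + 1 / mb 0 := by
  -- Step 1: Mb x / mb x ≤ Mb 0 / mb 0 + C₁ * x on [0, T)
  have key1 : ∀ x ∈ Set.Ico (0 : ℝ) T, Mb x / mb x ≤ Mb 0 / mb 0 + C₁ * x := by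
    have := aux_mono T (fun s => Mb 0 / mb 0 + C₁ * s - Mb s / mb s)
      (fun s => C₁ - (deriv Mb s * mb s - Mb s * (-2 * mb s * Mb s)) / (mb s) ^ 2)
      (by
        intro x hx
        have h1 : HasDerivAt (fun s => Mb s / mb s)
            ((deriv Mb x * mb x - Mb x * (-2 * mb x * Mb x)) / (mb x) ^ 2) x :=
          ((hMdiff x hx).hasDerivAt).div (hm x hx) (hpos x hx).ne'
        have h2 : HasDerivAt (fun s : ℝ => Mb 0 / mb 0 + C₁ * s) C₁ x := by
          simpa using ((hasDerivAt_id x).const_mul C₁).const_add (Mb 0 / mb 0)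
        exact h2.sub h1)
      (by
        intro x hx
        have hp := hpos x hx
        have hMx := hM x hx
        have hmul := mul_le_mul_of_nonneg_right hMx hp.le
        have : (deriv Mb x * mb x - Mb x * (-2 * mb x * Mb x)) / (mb x) ^ 2 ≤ C₁ := by
          rw [div_le_iff₀ (by positivity)]
          nlinarith
        linarith)
    intro x hx
    have := this x hx
    linarith
  -- Step 2: the main bound via g = (mb)⁻¹
  intro t ht
  have hpt := hpos t ht
  refine ⟨by positivity, ?_⟩
  have key2 := aux_mono T
    (fun s => (mb 0)⁻¹ + 2 * (Mb 0 / mb 0) * s + C₁ * s ^ 2 - (mb s)⁻¹)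
    (fun s => 2 * (Mb 0 / mb 0) + C₁ * (2 * s) - -(-2 * mb s * Mb s) / (mb s) ^ 2)
    (by
      intro x hx
      have h1 : HasDerivAt (fun s => (mb s)⁻¹) (-(-2 * mb x * Mb x) / (mb x) ^ 2) x :=
        (hm x hx).inv (hpos x hx).ne'
      have h2 : HasDerivAt (fun s : ℝ => (mb 0)⁻¹ + 2 * (Mb 0 / mb 0) * s + C₁ * s ^ 2)
          (2 * (Mb 0 / mb 0) + C₁ * (2 * x)) x := by
        have ha : HasDerivAt (fun s : ℝ => 2 * (Mb 0 / mb 0) * s) (2 * (Mb 0 / mb 0)) x := by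
          simpa using (hasDerivAt_id x).const_mul (2 * (Mb 0 / mb 0))
        have hb : HasDerivAt (fun s : ℝ => C₁ * s ^ 2) (C₁ * (2 * x)) x := by
          simpa using (hasDerivAt_pow 2 x).const_mul C₁
        exact (ha.const_add ((mb 0)⁻¹)).add hb
      exact h2.sub h1)
    (by
      intro x hx
      have hp := hpos x hx
      have hk := key1 x hx
      have heq : -(-2 * mb x * Mb x) / (mb x) ^ 2 = 2 * (Mb x / mb x) := by
        field_simp
      show 0 ≤ 2 * (Mb 0 / mb 0) + C₁ * (2 * x) - -(-2 * mb x * Mb x) / (mb x) ^ 2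
      rw [heq]
      have hx0 : 0 ≤ x := hx.1
      nlinarith [mul_le_mul_of_nonneg_left hk (by norm_num : (0:ℝ) ≤ 2)])
  have hft := key2 t ht
  have hp0 := hpos 0 ⟨le_refl 0, hT⟩
  rw [one_div, one_div]
  linarith
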